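/- arXiv:1701.00306 — 2 statements merged into one kernel-verified Lean document; each statement's English description precedes it below -/
import Mathlib

section
/- Let λ₁,…,λ_m be positive real numbers, let c₁,…,c_m be positive real numbers, and let α > 0 be a real number. Then 0 < (∑_{i=1}^m 1/(c_i + λ_i α))⁻¹ − (∑_{i=1}^m 1/c_i)⁻¹, and moreover this difference is at most α · max_i λ_i. In particular the difference is O(α) as α → 0. -/
open Finset

/-- Harmonic-sum comparison: for positive reals `c i` perturbed by `λ i * α`, the
reciprocal of the sum of reciprocals strictly increases, with increase at most
`α * max_i λ i`. -/
theorem stmt0 (m : ℕ) (hm : 0 < m) (lam c : Fin m → ℝ)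
    (hlam : ∀ i, 0 < lam i) (hc : ∀ i, 0 < c i) (α : ℝ) (hα : 0 < α) :
    0 < (∑ i, (c i + lam i * α)⁻¹)⁻¹ - (∑ i, (c i)⁻¹)⁻¹ ∧
    (∑ i, (c i + lam i * α)⁻¹)⁻¹ - (∑ i, (c i)⁻¹)⁻¹ ≤
      α * Finset.univ.sup' ⟨⟨0, hm⟩, Finset.mem_univ _⟩ lam := by
  set M := Finset.univ.sup' ⟨⟨0, hm⟩, Finset.mem_univ _⟩ lam with hMdef
  have hne : (Finset.univ : Finset (Fin m)).Nonempty := ⟨⟨0, hm⟩, Finset.mem_univ _⟩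
  have hMpos : 0 < M := lt_of_lt_of_le (hlam ⟨0, hm⟩) (Finset.le_sup' lam (Finset.mem_univ _))
  have hMle : ∀ i, lam i ≤ M := fun i => Finset.le_sup' lam (Finset.mem_univ i)
  have hci : ∀ i, 0 < c i + lam i * α := fun i => by
    have := hc i; have := hlam i; positivity
  have hS : 0 < ∑ i, (c i)⁻¹ :=
    Finset.sum_pos (fun i _ => inv_pos.2 (hc i)) hne
  have hT : 0 < ∑ i, (c i + lam i * α)⁻¹ :=
    Finset.sum_pos (fun i _ => inv_pos.2 (hci i)) hne
  have hTS : (∑ i, (c i + lam i * α)⁻¹) < ∑ i, (c i)⁻¹ := by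
    apply Finset.sum_lt_sum_of_nonempty hne
    intro i _
    apply inv_strictAnti₀ (hc i)
    have := hlam i
    nlinarith
  set S := ∑ i, (c i)⁻¹
  set T := ∑ i, (c i + lam i * α)⁻¹
  constructor
  · have : S⁻¹ < T⁻¹ := by
      apply inv_strictAnti₀ hT hTS
    linarith
  · -- key bound: S - T ≤ α * M * (S * T)
    have hdiff : S - T = α * ∑ i, lam i * ((c i)⁻¹ * (c i + lam i * α)⁻¹) := by
      rw [Finset.mul_sum, ← Finset.sum_sub_distrib]
      apply Finset.sum_congr rfl
      intro i _
      have h1 := (hc i).ne'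
      have h2 := (hci i).ne'
      field_simp
      ring
    have hsum : ∑ i, lam i * ((c i)⁻¹ * (c i + lam i * α)⁻¹) ≤ M * (S * T) := by
      calc ∑ i, lam i * ((c i)⁻¹ * (c i + lam i * α)⁻¹)
          ≤ ∑ i, M * ((c i)⁻¹ * T) := by
            apply Finset.sum_le_sum
            intro i _
            have hb : (c i + lam i * α)⁻¹ ≤ T :=
              Finset.single_le_sum (f := fun j => (c j + lam j * α)⁻¹)
                (fun j _ => (inv_pos.2 (hci j)).le) (Finset.mem_univ i)
            have ha : (0:ℝ) ≤ (c i)⁻¹ := (inv_pos.2 (hc i)).le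
            have : (c i)⁻¹ * (c i + lam i * α)⁻¹ ≤ (c i)⁻¹ * T :=
              mul_le_mul_of_nonneg_left hb ha
            nlinarith [hlam i, hMle i, mul_pos (inv_pos.2 (hc i)) (inv_pos.2 (hci i))]
        _ = M * (S * T) := by rw [← Finset.mul_sum, ← Finset.sum_mul]
    have key : S - T ≤ α * M * (S * T) := by
      rw [hdiff]
      calc α * ∑ i, lam i * ((c i)⁻¹ * (c i + lam i * α)⁻¹)
          ≤ α * (M * (S * T)) := by
            apply mul_le_mul_of_nonneg_left hsum hα.le
        _ = α * M * (S * T) := by ring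
    have heq : T⁻¹ - S⁻¹ = (S - T) / (S * T) := by
      field_simp
    rw [heq, div_le_iff₀ (by positivity)]
    linarith
end

section
/- Let P ⊂ ℝ^r be a compact convex polytope containing the origin O in its interior, and let u : P → ℝ be a convex function with u ≥ 0 and u(O) = 0. Then there exists a constant Λ > 0, depending only on P (not on u), such that ∫_P u dy ≤ Λ ∫_{∂P} u dσ, where dσ is the surface measure on ∂P. -/
open MeasureTheory
open Metric Set
open scoped ENNReal NNReal

noncomputable section AuxiliaryForStmt4

def cone4 {r : ℕ} (B : Set (EuclideanSpace ℝ (Fin r))) : Set (EuclideanSpace ℝ (Fin r)) :=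
  {z | ∃ t : ℝ, t ∈ Set.Ioc (0:ℝ) 1 ∧ ∃ y ∈ B, z = t • y}

def C4 (r : ℕ) (R : ℝ) : ℝ≥0∞ :=
  ENNReal.ofReal (2^r * (R+2)) * volume (closedBall (0 : EuclideanSpace ℝ (Fin r)) 1)
    + volume (closedBall (0 : EuclideanSpace ℝ (Fin r)) R)

lemma C4_pos {r : ℕ} {R : ℝ} (hR : 1 ≤ R) : 0 < C4 r R := by
  have : (0:ℝ≥0∞) < volume (closedBall (0 : EuclideanSpace ℝ (Fin r)) R) :=
    measure_closedBall_pos _ _ (by linarith)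
  exact lt_of_lt_of_le this le_add_self

lemma C4_ne_top {r : ℕ} {R : ℝ} : C4 r R ≠ ⊤ := by
  have h1 : volume (closedBall (0 : EuclideanSpace ℝ (Fin r)) 1) ≠ ⊤ :=
    (isCompact_closedBall _ _).measure_lt_top.ne
  have h2 : volume (closedBall (0 : EuclideanSpace ℝ (Fin r)) R) ≠ ⊤ :=
    (isCompact_closedBall _ _).measure_lt_top.ne
  exact ENNReal.add_ne_top.2 ⟨ENNReal.mul_ne_top ENNReal.ofReal_ne_top h1, h2⟩

lemma cone4_subset_closedBall {r : ℕ} {R : ℝ} (hR : 0 ≤ R) {B : Set (EuclideanSpace ℝ (Fin r))}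
    (hB : B ⊆ closedBall 0 R) : cone4 B ⊆ closedBall 0 R := by
  rintro z ⟨t, ⟨ht0, ht1⟩, y, hy, rfl⟩
  have hy' := hB hy
  simp only [mem_closedBall, dist_zero_right] at hy' ⊢
  rw [norm_smul]
  calc ‖t‖ * ‖y‖ ≤ 1 * R := by
        apply mul_le_mul _ hy' (norm_nonneg _) zero_le_one
        rw [Real.norm_eq_abs, abs_of_pos ht0]; exact ht1
    _ = R := one_mul R

lemma piece4 {r : ℕ} (hr : 1 ≤ r) {R : ℝ} (hR : 1 ≤ R) (U : Set (EuclideanSpace ℝ (Fin r)))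
    (hU : U ⊆ closedBall 0 R) (hd : EMetric.diam U ≤ 1) :
    volume (cone4 U) ≤ C4 r R * ⨆ _ : U.Nonempty, EMetric.diam U ^ ((r:ℝ)-1) := by
  have hR0 : (0:ℝ) < R := by linarith
  rcases U.eq_empty_or_nonempty with rfl | hne
  · have : cone4 (∅ : Set (EuclideanSpace ℝ (Fin r))) = ∅ := by
      ext z; simp [cone4]
    simp [this]
  rw [iSup_pos hne]
  obtain ⟨x0, hx0⟩ := hne
  have hdne : EMetric.diam U ≠ ⊤ := ne_top_of_le_ne_top ENNReal.one_ne_top hd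
  by_cases h1 : r = 1
  · subst h1
    have he : ((1:ℕ):ℝ) - 1 = 0 := by norm_num
    rw [he, ENNReal.rpow_zero, mul_one]
    calc volume (cone4 U) ≤ volume (closedBall (0 : EuclideanSpace ℝ (Fin 1)) R) :=
          measure_mono (cone4_subset_closedBall hR0.le hU)
      _ ≤ C4 1 R := le_add_self
  have hr2 : 2 ≤ r := by omega
  by_cases hd0 : EMetric.diam U = 0
  · -- U is a subsingleton; the cone lies in a line, which is null since r ≥ 2
    have hsub : U.Subsingleton := EMetric.diam_eq_zero_iff.1 hd0
    have hU1 : U ⊆ {x0} := fun y hy => hsub hy hx0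
    have hcone : cone4 U ⊆ (Submodule.span ℝ {x0} : Submodule ℝ (EuclideanSpace ℝ (Fin r))) := by
      rintro z ⟨t, ht, y, hy, rfl⟩
      have : y = x0 := hU1 hy
      subst this
      exact Submodule.smul_mem _ _ (Submodule.mem_span_singleton_self _)
    have hnull : volume (cone4 U) = 0 := by
      refine measure_mono_null hcone (Measure.addHaar_submodule _ _ ?_)
      intro hTop
      have h1 : Module.finrank ℝ (Submodule.span ℝ ({x0} : Set (EuclideanSpace ℝ (Fin r)))) ≤ 1 := by
        classical
        refine le_trans (finrank_span_le_card _) ?_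
        simp
      rw [hTop] at h1
      have h2 : Module.finrank ℝ (⊤ : Submodule ℝ (EuclideanSpace ℝ (Fin r))) = r := by
        rw [finrank_top, finrank_euclideanSpace_fin]
      omega
    have hpos : (0:ℝ) < (r:ℝ) - 1 := by
      have : (2:ℝ) ≤ (r:ℝ) := by exact_mod_cast hr2
      linarith
    rw [hd0, ENNReal.zero_rpow_of_pos hpos, mul_zero, hnull]
  -- main case: 0 < diam U ≤ 1
  set dR : ℝ := (EMetric.diam U).toReal with hdRdef
  have hdpos : 0 < dR := ENNReal.toReal_pos hd0 hdne
  have hdle1 : dR ≤ 1 := by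
    have := ENNReal.toReal_mono ENNReal.one_ne_top hd
    simpa using this
  have hx0R : ‖x0‖ ≤ R := by simpa [mem_closedBall, dist_zero_right] using hU hx0
  have hdist : ∀ y ∈ U, dist y x0 ≤ dR := by
    intro y hy
    have h := EMetric.edist_le_diam_of_mem hy hx0
    have := ENNReal.toReal_mono hdne h
    simpa [dist_edist] using this
  set N : ℕ := ⌈R / dR⌉₊ with hNdef
  have hstep : (0:ℝ) < dR / R := div_pos hdpos hR0
  have hcover : cone4 U ⊆
      ⋃ j ∈ Finset.range (N+1), closedBall (((j : ℝ) * (dR / R)) • x0) (2*dR) := by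
    rintro z ⟨t, ⟨ht0, ht1⟩, y, hy, rfl⟩
    set st : ℝ := dR / R with hstdef
    set j : ℕ := ⌊t / st⌋₊ with hjdef
    have hjle : (j:ℝ) ≤ t / st := Nat.floor_le (by positivity)
    have hjlt : t / st < (j:ℝ) + 1 := Nat.lt_floor_add_one _
    have hjN : j ≤ N := by
      have h2 : t / st ≤ R / dR := by
        rw [hstdef, div_div_eq_mul_div]
        gcongr
        nlinarith
      have h3 : (j:ℝ) ≤ (N:ℝ) := le_trans hjle (le_trans h2 (Nat.le_ceil _))
      exact_mod_cast h3
    refine mem_biUnion (Finset.mem_range.2 (Nat.lt_succ_of_le hjN)) ?_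
    rw [mem_closedBall]
    have hA : dist (t • y) (t • x0) ≤ dR := by
      rw [dist_smul₀]
      calc ‖t‖ * dist y x0 ≤ 1 * dR := by
            apply mul_le_mul _ (hdist y hy) dist_nonneg zero_le_one
            rw [Real.norm_eq_abs, abs_of_pos ht0]; exact ht1
        _ = dR := one_mul _
    have hB : dist (t • x0) (((j:ℝ) * st) • x0) ≤ dR := by
      rw [dist_eq_norm, ← sub_smul, norm_smul]
      have hjt : (j:ℝ) * st ≤ t := by
        rw [← le_div_iff₀ hstep]; exact hjle
      have htj : t - (j:ℝ) * st ≤ st := by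
        have := (div_lt_iff₀ hstep).1 hjlt
        nlinarith
      have habs : ‖t - (j:ℝ)*st‖ ≤ st := by
        rw [Real.norm_eq_abs, abs_of_nonneg (by linarith)]; exact htj
      calc ‖t - (j:ℝ)*st‖ * ‖x0‖ ≤ st * R :=
            mul_le_mul habs hx0R (norm_nonneg _) hstep.le
        _ = dR := by rw [hstdef]; field_simp
    calc dist (t • y) (((j:ℝ) * st) • x0)
        ≤ dist (t • y) (t • x0) + dist (t • x0) (((j:ℝ) * st) • x0) := dist_triangle _ _ _
      _ ≤ dR + dR := add_le_add hA hB
      _ = 2 * dR := by ring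
  have hballvol : ∀ j : ℕ, volume (closedBall (((j : ℝ) * (dR / R)) • x0) (2*dR))
      = ENNReal.ofReal ((2*dR) ^ r) * volume (ball (0 : EuclideanSpace ℝ (Fin r)) 1) := by
    intro j
    rw [Measure.addHaar_closedBall _ _ (by positivity), finrank_euclideanSpace_fin]
  have hvol1 : volume (cone4 U)
      ≤ (N+1 : ℕ) * (ENNReal.ofReal ((2*dR) ^ r) * volume (ball (0 : EuclideanSpace ℝ (Fin r)) 1)) := by
    refine (measure_mono hcover).trans ((measure_biUnion_finset_le _ _).trans ?_)
    calc ∑ j ∈ Finset.range (N+1), volume (closedBall (((j : ℝ) * (dR / R)) • x0) (2*dR))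
        = ∑ _j ∈ Finset.range (N+1),
          (ENNReal.ofReal ((2*dR) ^ r) * volume (ball (0 : EuclideanSpace ℝ (Fin r)) 1)) :=
          Finset.sum_congr rfl fun j _ => hballvol j
      _ = (N+1 : ℕ) * (ENNReal.ofReal ((2*dR) ^ r) * volume (ball (0 : EuclideanSpace ℝ (Fin r)) 1)) := by
          rw [Finset.sum_const, Finset.card_range, nsmul_eq_mul]
      _ ≤ (N+1 : ℕ) * (ENNReal.ofReal ((2*dR) ^ r) * volume (ball (0 : EuclideanSpace ℝ (Fin r)) 1)) :=
          le_rfl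
  have hNle : (N:ℝ) + 1 ≤ R/dR + 2 := by
    have h := Nat.ceil_lt_add_one (le_of_lt (div_pos hR0 hdpos))
    rw [← hNdef] at h
    linarith
  have hpow : dR ^ r = dR ^ (r-1) * dR := by
    rw [← pow_succ]
    congr 1
    omega
  have hkey : ((N:ℝ)+1) * (2*dR)^r ≤ 2^r*(R+2) * dR^(r-1) := by
    have h2 : (2*dR)^r = 2^r * dR^r := mul_pow _ _ _
    have hdpow : (0:ℝ) < dR^(r-1) := pow_pos hdpos _
    rw [h2, hpow]
    have h4 : ((N:ℝ)+1) * (2^r * (dR^(r-1)*dR)) = (2:ℝ)^r * (((N:ℝ)+1)*dR) * dR^(r-1) := by ring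
    have h5 : (2:ℝ)^r*(R+2) * dR^(r-1) = (2:ℝ)^r * (R+2) * dR^(r-1) := by ring
    rw [h4, h5]
    have h3 : ((N:ℝ)+1)*dR ≤ R + 2 := by
      calc ((N:ℝ)+1)*dR ≤ (R/dR+2)*dR := by nlinarith
        _ = R + 2*dR := by field_simp
        _ ≤ R + 2 := by linarith
    gcongr
  have hrc : ((r-1:ℕ):ℝ) = (r:ℝ)-1 := by
    push_cast [hr]
    ring
  have hdiam_pow : ENNReal.ofReal (dR^(r-1)) = EMetric.diam U ^ ((r:ℝ)-1) := by
    have h6 : EMetric.diam U = ENNReal.ofReal dR := (ENNReal.ofReal_toReal hdne).symm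
    rw [h6, ← hrc, ← Real.rpow_natCast dR (r-1)]
    exact (ENNReal.ofReal_rpow_of_pos hdpos).symm
  calc volume (cone4 U)
      ≤ (N+1 : ℕ) * (ENNReal.ofReal ((2*dR) ^ r) * volume (ball (0 : EuclideanSpace ℝ (Fin r)) 1)) :=
        hvol1
    _ = ENNReal.ofReal (((N:ℝ)+1) * (2*dR) ^ r) * volume (ball (0 : EuclideanSpace ℝ (Fin r)) 1) := by
        rw [ENNReal.ofReal_mul (by positivity), ← mul_assoc]
        congr 2
        rw [← ENNReal.ofReal_natCast (N+1)]
        congr 1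
        push_cast
        ring
    _ ≤ ENNReal.ofReal (2^r*(R+2) * dR^(r-1)) * volume (closedBall (0 : EuclideanSpace ℝ (Fin r)) 1) := by
        exact mul_le_mul' (ENNReal.ofReal_le_ofReal hkey) (measure_mono ball_subset_closedBall)
    _ = (ENNReal.ofReal (2^r*(R+2)) * volume (closedBall (0 : EuclideanSpace ℝ (Fin r)) 1))
          * (EMetric.diam U ^ ((r:ℝ)-1)) := by
        rw [ENNReal.ofReal_mul (by positivity), ← hdiam_pow]
        ring
    _ ≤ C4 r R * EMetric.diam U ^ ((r:ℝ)-1) := by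
        exact mul_le_mul_left le_self_add _

lemma cone4_le {r : ℕ} (hr : 1 ≤ r) {R : ℝ} (hR : 1 ≤ R)
    (B : Set (EuclideanSpace ℝ (Fin r))) (hB : B ⊆ closedBall 0 R) :
    volume (cone4 B) ≤ C4 r R * μH[(r:ℝ)-1] B := by
  have hexp : (0:ℝ) ≤ (r:ℝ) - 1 := by
    have : (1:ℝ) ≤ (r:ℝ) := by exact_mod_cast hr
    linarith
  rw [MeasureTheory.Measure.hausdorffMeasure_apply]
  have key : ∀ (t : ℕ → Set (EuclideanSpace ℝ (Fin r))), B ⊆ (⋃ n, t n) →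
      (∀ n, EMetric.diam (t n) ≤ 1) →
      volume (cone4 B) ≤ C4 r R * ∑' n, ⨆ _ : (t n).Nonempty, EMetric.diam (t n) ^ ((r:ℝ)-1) := by
    intro t hcov hdiam
    have hsub : cone4 B ⊆ ⋃ n, cone4 (t n ∩ B) := by
      rintro z ⟨s, hs, y, hy, rfl⟩
      obtain ⟨n, hn⟩ := mem_iUnion.1 (hcov hy)
      exact mem_iUnion.2 ⟨n, s, hs, y, ⟨hn, hy⟩, rfl⟩
    calc volume (cone4 B) ≤ ∑' n, volume (cone4 (t n ∩ B)) :=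
          (measure_mono hsub).trans (measure_iUnion_le _)
      _ ≤ ∑' n, C4 r R * (⨆ _ : (t n ∩ B).Nonempty, EMetric.diam (t n ∩ B) ^ ((r:ℝ)-1)) :=
          ENNReal.tsum_le_tsum fun n => piece4 hr hR _ (inter_subset_right.trans hB)
            ((EMetric.diam_mono inter_subset_left).trans (hdiam n))
      _ ≤ ∑' n, C4 r R * (⨆ _ : (t n).Nonempty, EMetric.diam (t n) ^ ((r:ℝ)-1)) := by
          refine ENNReal.tsum_le_tsum fun n => mul_le_mul_right ?_ _
          refine iSup_le fun hnn => le_iSup_of_le (hnn.mono inter_subset_left) ?_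
          exact ENNReal.rpow_le_rpow (EMetric.diam_mono inter_subset_left) hexp
      _ = C4 r R * ∑' n, ⨆ _ : (t n).Nonempty, EMetric.diam (t n) ^ ((r:ℝ)-1) :=
          ENNReal.tsum_mul_left
  have h1 : volume (cone4 B) ≤ C4 r R *
      ⨅ (t : ℕ → Set (EuclideanSpace ℝ (Fin r))) (_ : B ⊆ ⋃ n, t n)
        (_ : ∀ n, EMetric.diam (t n) ≤ 1),
        ∑' n, ⨆ _ : (t n).Nonempty, EMetric.diam (t n) ^ ((r:ℝ)-1) := by
    rw [ENNReal.mul_iInf_of_ne (C4_pos hR).ne' C4_ne_top]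
    refine le_iInf fun t => ?_
    rw [ENNReal.mul_iInf_of_ne (C4_pos hR).ne' C4_ne_top]
    refine le_iInf fun hcov => ?_
    rw [ENNReal.mul_iInf_of_ne (C4_pos hR).ne' C4_ne_top]
    exact le_iInf fun hdiam => key t hcov hdiam
  refine h1.trans (mul_le_mul_right ?_ _)
  exact le_iSup₂ (f := fun (r₀ : ℝ≥0∞) (_ : 0 < r₀) =>
    ⨅ (t : ℕ → Set (EuclideanSpace ℝ (Fin r))) (_ : B ⊆ ⋃ n, t n)
      (_ : ∀ n, EMetric.diam (t n) ≤ r₀),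
      ∑' n, ⨆ _ : (t n).Nonempty, EMetric.diam (t n) ^ ((r:ℝ)-1)) 1 one_pos

def face4 {r : ℕ} (i : Fin r) (ε : ℝ) : Set (EuclideanSpace ℝ (Fin r)) :=
  {x | x i = ε ∧ ∀ j, |x j| ≤ 1}

lemma face4_finite {r : ℕ} (hr : 1 ≤ r) (i : Fin r) (ε : ℝ) :
    μH[(r:ℝ)-1] (face4 i ε) < ⊤ := by
  classical
  have hexp : (0:ℝ) ≤ (r:ℝ) - 1 := by
    have : (1:ℝ) ≤ (r:ℝ) := by exact_mod_cast hr
    linarith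
  set φ : ({j : Fin r // j ≠ i} → ℝ) → EuclideanSpace ℝ (Fin r) := fun y =>
    (WithLp.equiv 2 (Fin r → ℝ)).symm (fun j => if h : j = i then ε else y ⟨j, h⟩) with hφdef
  have hφ : LipschitzWith (r : ℝ≥0) φ := by
    apply LipschitzWith.of_dist_le_mul
    intro y y'
    rw [EuclideanSpace.dist_eq]
    have hterm : ∀ j : Fin r, dist (φ y j) (φ y' j) ^ 2 ≤ dist y y' ^ 2 := by
      intro j
      by_cases h : j = i
      · simp only [hφdef, WithLp.equiv_symm_apply, PiLp.toLp_apply, dif_pos h, dist_self,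
          ne_eq, zero_pow, OfNat.ofNat_ne_zero, not_false_eq_true]
        positivity
      · simp only [hφdef, WithLp.equiv_symm_apply, PiLp.toLp_apply, dif_neg h]
        exact pow_le_pow_left₀ dist_nonneg (dist_le_pi_dist y y' ⟨j, h⟩) 2
    calc Real.sqrt (∑ j, dist (φ y j) (φ y' j) ^ 2)
        ≤ Real.sqrt (∑ _j : Fin r, dist y y' ^ 2) :=
          Real.sqrt_le_sqrt (Finset.sum_le_sum fun j _ => hterm j)
      _ = Real.sqrt ((r:ℝ) * dist y y' ^ 2) := by
          rw [Finset.sum_const, Finset.card_univ, Fintype.card_fin, nsmul_eq_mul]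
      _ ≤ (r:ℝ≥0) * dist y y' := by
          rw [Real.sqrt_mul (by positivity), Real.sqrt_sq dist_nonneg]
          push_cast
          have h1 : Real.sqrt (r:ℝ) ≤ (r:ℝ) := by
            have hs := Real.sq_sqrt (show (0:ℝ) ≤ (r:ℝ) by positivity)
            have hs0 := Real.sqrt_nonneg (r:ℝ)
            have : (1:ℝ) ≤ (r:ℝ) := by exact_mod_cast hr
            nlinarith [sq_nonneg (Real.sqrt (r:ℝ) - 1)]
          exact mul_le_mul_of_nonneg_right h1 dist_nonneg
  have hsubset : face4 i ε ⊆ φ '' (univ.pi fun _ : {j : Fin r // j ≠ i} => Icc (-1:ℝ) 1) := by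
    intro x hx
    refine ⟨fun j => x j.1, ?_, ?_⟩
    · intro j _
      have := hx.2 j.1
      rw [abs_le] at this
      exact this
    · rw [hφdef]
      simp only [Equiv.symm_apply_eq]
      funext j
      by_cases h : j = i
      · subst h
        simp only [dif_pos rfl, WithLp.equiv_apply]
        exact hx.1.symm
      · simp [dif_neg h, WithLp.equiv_apply]
  have hcard : ((Fintype.card {j : Fin r // j ≠ i} : ℕ) : ℝ) = (r:ℝ) - 1 := by
    have h1 : Fintype.card {j : Fin r // j ≠ i} = r - 1 := by
      have := Fintype.card_subtype_compl (fun j : Fin r => j = i)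
      simp only [Fintype.card_subtype_eq, Fintype.card_fin] at this
      exact this
    rw [h1]
    push_cast [hr]
    ring
  have hcube : μH[(r:ℝ)-1] (univ.pi fun _ : {j : Fin r // j ≠ i} => Icc (-1:ℝ) 1) < ⊤ := by
    rw [← hcard, MeasureTheory.hausdorffMeasure_pi_real]
    exact (isCompact_univ_pi fun _ => isCompact_Icc).measure_lt_top
  have himg := hφ.hausdorffMeasure_image_le hexp
      (univ.pi fun _ : {j : Fin r // j ≠ i} => Icc (-1:ℝ) 1)
  calc μH[(r:ℝ)-1] (face4 i ε)
      ≤ μH[(r:ℝ)-1] (φ '' (univ.pi fun _ : {j : Fin r // j ≠ i} => Icc (-1:ℝ) 1)) :=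
        measure_mono hsubset
    _ ≤ ((r:ℝ≥0) : ℝ≥0∞) ^ ((r:ℝ)-1) *
        μH[(r:ℝ)-1] (univ.pi fun _ : {j : Fin r // j ≠ i} => Icc (-1:ℝ) 1) := himg
    _ < ⊤ := ENNReal.mul_lt_top (ENNReal.rpow_lt_top_of_nonneg hexp ENNReal.coe_ne_top) hcube

lemma norm_le_of_coords {r : ℕ} (hr : 1 ≤ r) (y : EuclideanSpace ℝ (Fin r))
    (h : ∀ j, |y j| ≤ 1) : ‖y‖ ≤ (r:ℝ) := by
  rw [EuclideanSpace.norm_eq]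
  have hsum : ∑ j, ‖y j‖ ^ 2 ≤ (r:ℝ) := by
    calc ∑ j, ‖y j‖ ^ 2 ≤ ∑ _j : Fin r, (1:ℝ) := by
          refine Finset.sum_le_sum fun j _ => ?_
          have := h j
          rw [Real.norm_eq_abs]
          nlinarith [abs_nonneg (y j)]
      _ = (r:ℝ) := by simp
  calc Real.sqrt (∑ j, ‖y j‖ ^ 2) ≤ Real.sqrt (r:ℝ) := Real.sqrt_le_sqrt hsum
    _ ≤ (r:ℝ) := by
        have hs := Real.sq_sqrt (show (0:ℝ) ≤ (r:ℝ) by positivity)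
        have hs0 := Real.sqrt_nonneg (r:ℝ)
        have : (1:ℝ) ≤ (r:ℝ) := by exact_mod_cast hr
        nlinarith [sq_nonneg (Real.sqrt (r:ℝ) - 1)]

lemma coord_le_norm {r : ℕ} (y : EuclideanSpace ℝ (Fin r)) (i : Fin r) : |y i| ≤ ‖y‖ := by
  rw [EuclideanSpace.norm_eq]
  have h1 : |y i| ^ 2 ≤ ∑ j, ‖y j‖ ^ 2 := by
    have := Finset.single_le_sum (f := fun j => ‖y j‖ ^ 2)
      (fun j _ => by positivity) (Finset.mem_univ i)
    simpa [Real.norm_eq_abs, sq_abs] using this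
  calc |y i| = Real.sqrt (|y i| ^ 2) := by rw [Real.sqrt_sq (abs_nonneg _)]
    _ ≤ Real.sqrt (∑ j, ‖y j‖ ^ 2) := Real.sqrt_le_sqrt h1

lemma frontier_finite {r : ℕ} (hr : 1 ≤ r) {P : Set (EuclideanSpace ℝ (Fin r))}
    (hconv : Convex ℝ P) (hnhds : P ∈ nhds (0 : EuclideanSpace ℝ (Fin r)))
    {R : ℝ} (hR : 1 ≤ R) (hPR : P ⊆ closedBall 0 R) :
    μH[(r:ℝ)-1] (frontier P) < ⊤ := by
  have hR0 : (0:ℝ) < R := by linarith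
  have hexp : (0:ℝ) ≤ (r:ℝ) - 1 := by
    have : (1:ℝ) ≤ (r:ℝ) := by exact_mod_cast hr
    linarith
  obtain ⟨ρ, hρ0, hρ⟩ : ∃ ρ > 0, ball (0 : EuclideanSpace ℝ (Fin r)) ρ ⊆ P :=
    Metric.mem_nhds_iff.1 hnhds
  have habs : Absorbent ℝ P := absorbent_nhds_zero hnhds
  set K : Set (EuclideanSpace ℝ (Fin r)) := ⋃ i : Fin r, (face4 i 1 ∪ face4 i (-1)) with hK
  set g : EuclideanSpace ℝ (Fin r) → EuclideanSpace ℝ (Fin r) :=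
    fun y => (gauge P y)⁻¹ • y with hg
  -- membership facts for K
  have hKnorm : ∀ y ∈ K, 1 ≤ ‖y‖ ∧ ‖y‖ ≤ (r:ℝ) := by
    intro y hy
    rw [hK, mem_iUnion] at hy
    obtain ⟨i, hy⟩ := hy
    have hface : ∃ ε : ℝ, |ε| = 1 ∧ y ∈ face4 i ε := by
      rcases hy with h | h
      · exact ⟨1, by norm_num, h⟩
      · exact ⟨-1, by norm_num, h⟩
    obtain ⟨ε, hε, hyi, hyb⟩ := hface
    constructor
    · calc (1:ℝ) = |y i| := by rw [hyi, hε]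
        _ ≤ ‖y‖ := coord_le_norm y i
    · exact norm_le_of_coords hr y hyb
  -- gauge bounds on K
  have hgauge_lb : ∀ y : EuclideanSpace ℝ (Fin r), ‖y‖ / R ≤ gauge P y :=
    fun y => le_gauge_of_subset_closedBall habs hR0.le hPR
  have hgauge_ub : ∀ y : EuclideanSpace ℝ (Fin r), gauge P y ≤ ‖y‖ / ρ := by
    intro y
    calc gauge P y ≤ gauge (ball (0 : EuclideanSpace ℝ (Fin r)) ρ) y :=
          gauge_mono (absorbent_ball_zero hρ0) hρ y
      _ = ‖y‖ / ρ := gauge_ball hρ0.le y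
  have hb_lb : ∀ y ∈ K, 1/R ≤ gauge P y := by
    intro y hy
    calc 1/R ≤ ‖y‖/R := by
          have := (hKnorm y hy).1
          gcongr
      _ ≤ gauge P y := hgauge_lb y
  have hb_ub : ∀ y ∈ K, gauge P y ≤ (r:ℝ)/ρ := by
    intro y hy
    calc gauge P y ≤ ‖y‖/ρ := hgauge_ub y
      _ ≤ (r:ℝ)/ρ := by
          have := (hKnorm y hy).2
          gcongr
  -- the Lipschitz constant of `gauge P`
  set ρ' : ℝ≥0 := ⟨ρ, hρ0.le⟩ with hρ'
  have hLg : LipschitzWith ρ'⁻¹ (gauge P) := hconv.lipschitzWith_gauge (by exact_mod_cast hρ0) hρ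
  -- Lipschitz bound for g on K
  set L : ℝ≥0 := Real.toNNReal (R + R^2*(r:ℝ)/ρ) with hL
  have hgL : LipschitzOnWith L g K := by
    rw [lipschitzOnWith_iff_dist_le_mul]
    intro y hy y' hy'
    set a := gauge P y with ha
    set b := gauge P y' with hbdef
    have ha0 : 0 < a := lt_of_lt_of_le (by positivity) (hb_lb y hy)
    have hb0 : 0 < b := lt_of_lt_of_le (by positivity) (hb_lb y' hy')
    have hainv : a⁻¹ ≤ R := by
      rw [inv_le_comm₀ ha0 hR0, ← one_div]
      exact hb_lb y hy
    have hbinv : b⁻¹ ≤ R := by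
      rw [inv_le_comm₀ hb0 hR0, ← one_div]
      exact hb_lb y' hy'
    have hyr : ‖y‖ ≤ (r:ℝ) := (hKnorm y hy).2
    have hab : |b - a| ≤ ρ⁻¹ * dist y y' := by
      have h1 := hLg.dist_le_mul y' y
      rw [Real.dist_eq, dist_comm y' y] at h1
      have hcoe : ((ρ'⁻¹ : ℝ≥0) : ℝ) = ρ⁻¹ := by
        rw [NNReal.coe_inv]; rfl
      rw [hcoe] at h1
      exact h1
    calc dist (g y) (g y')
        ≤ dist (a⁻¹ • y) (b⁻¹ • y) + dist (b⁻¹ • y) (b⁻¹ • y') := dist_triangle _ _ _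
      _ ≤ |a⁻¹ - b⁻¹| * ‖y‖ + b⁻¹ * dist y y' := by
          apply add_le_add
          · apply le_of_eq
            rw [dist_eq_norm, ← sub_smul, norm_smul, Real.norm_eq_abs]
          · apply le_of_eq
            rw [dist_smul₀, Real.norm_eq_abs, abs_of_pos (show (0:ℝ) < b⁻¹ by positivity)]
      _ ≤ (R^2 * (ρ⁻¹ * dist y y')) * (r:ℝ) + R * dist y y' := by
          apply add_le_add
          · have hinv : |a⁻¹ - b⁻¹| ≤ R^2 * (ρ⁻¹ * dist y y') := by
              calc |a⁻¹ - b⁻¹| = |b - a| * (a⁻¹ * b⁻¹) := by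
                    rw [← abs_of_pos (show (0:ℝ) < a⁻¹ * b⁻¹ by positivity), ← abs_mul]
                    congr 1
                    field_simp
                _ ≤ (ρ⁻¹ * dist y y') * (R * R) := by
                    apply mul_le_mul hab _ (by positivity) (by positivity)
                    exact mul_le_mul hainv hbinv (by positivity) hR0.le
                _ = R^2 * (ρ⁻¹ * dist y y') := by ring
            exact mul_le_mul hinv hyr (norm_nonneg y) (by positivity)
          · exact mul_le_mul_of_nonneg_right hbinv dist_nonneg
      _ = (R + R^2*(r:ℝ)/ρ) * dist y y' := by
          field_simp
          ring
      _ = (L : ℝ) * dist y y' := by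
          rw [hL, Real.coe_toNNReal]
          positivity
  -- frontier P ⊆ g '' K
  have hfr : frontier P ⊆ g '' K := by
    intro x hx
    have hgx : gauge P x = 1 := (gauge_eq_one_iff_mem_frontier hconv hnhds).2 hx
    have hx0 : x ≠ 0 := by
      intro h
      have h0i : (0 : EuclideanSpace ℝ (Fin r)) ∈ interior P := by
        rw [mem_interior_iff_mem_nhds]
        exact hnhds
      rw [h, frontier, Set.mem_diff] at hx
      exact hx.2 h0i
    obtain ⟨i, -, hi⟩ := Finset.exists_max_image Finset.univ (fun j => |x j|)
      ⟨⟨0, hr⟩, Finset.mem_univ _⟩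
    set m := |x i| with hm
    have hm0 : 0 < m := by
      rcases (abs_nonneg (x i)).eq_or_lt with h0 | h0
      · exfalso
        apply hx0
        have hall : ∀ j, x j = 0 := by
          intro j
          have h1 := hi j (Finset.mem_univ j)
          have hmz : m = 0 := by rw [hm, ← h0]
          rw [hmz] at h1
          exact abs_eq_zero.1 (le_antisymm h1 (abs_nonneg _))
        exact (WithLp.ext_iff 2).2 (funext fun j => by simpa using hall j)
      · exact h0
    set y := m⁻¹ • x with hy
    have hyj : ∀ j, y j = m⁻¹ * x j := fun j => rfl
    have hybound : ∀ j, |y j| ≤ 1 := by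
      intro j
      rw [hyj, abs_mul, abs_inv, abs_abs]
      rw [inv_mul_le_iff₀ hm0, mul_one]
      exact hi j (Finset.mem_univ j)
    have hyK : y ∈ K := by
      rw [hK, mem_iUnion]
      refine ⟨i, ?_⟩
      rcases le_or_gt 0 (x i) with hxi | hxi
      · left
        refine ⟨?_, hybound⟩
        rw [hyj, hm, abs_of_nonneg hxi]
        have : x i ≠ 0 := by
          intro h'
          rw [hm, h', abs_zero] at hm0
          exact lt_irrefl _ hm0
        field_simp
      · right
        refine ⟨?_, hybound⟩
        rw [hyj, hm, abs_of_neg hxi]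
        field_simp
        rw [div_self hxi.ne]
    refine ⟨y, hyK, ?_⟩
    have hgy : gauge P y = m⁻¹ := by
      rw [hy, gauge_smul_of_nonneg (inv_nonneg.2 hm0.le), hgx, smul_eq_mul, mul_one]
    show (gauge P y)⁻¹ • y = x
    rw [hgy, inv_inv, hy, smul_inv_smul₀ hm0.ne']
  -- conclude
  have hKfin : μH[(r:ℝ)-1] K < ⊤ := by
    calc μH[(r:ℝ)-1] K ≤ ∑' i : Fin r, μH[(r:ℝ)-1] (face4 i 1 ∪ face4 i (-1)) := by
          rw [hK]
          exact measure_iUnion_le _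
      _ ≤ ∑' i : Fin r, (μH[(r:ℝ)-1] (face4 i 1) + μH[(r:ℝ)-1] (face4 i (-1))) :=
          ENNReal.tsum_le_tsum fun i => measure_union_le _ _
      _ < ⊤ := by
          rw [tsum_fintype]
          refine ENNReal.sum_lt_top.2 fun i _ => ?_
          exact ENNReal.add_lt_top.2 ⟨face4_finite hr i 1, face4_finite hr i (-1)⟩
  calc μH[(r:ℝ)-1] (frontier P) ≤ μH[(r:ℝ)-1] (g '' K) := measure_mono hfr
    _ ≤ (L:ℝ≥0∞)^((r:ℝ)-1) * μH[(r:ℝ)-1] K := hgL.hausdorffMeasure_image_le hexp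
    _ < ⊤ := ENNReal.mul_lt_top (ENNReal.rpow_lt_top_of_nonneg hexp ENNReal.coe_ne_top) hKfin

end AuxiliaryForStmt4

/-- For a compact convex polytope `P ⊂ ℝ^r` (the convex hull of a finite set) with the
origin in its interior, there is a constant `Λ > 0` depending only on `P` such that for
every nonnegative convex function `u` on `P`, continuous on `P`, vanishing at the origin,
the integral of `u` over `P` is bounded by `Λ` times the integral of `u` over `∂P` with
respect to the `(r-1)`-dimensional Hausdorff (surface) measure. -/
theorem stmt4 (r : ℕ) (V : Finset (EuclideanSpace ℝ (Fin r)))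
    (P : Set (EuclideanSpace ℝ (Fin r)))
    (hP : P = convexHull ℝ (V : Set (EuclideanSpace ℝ (Fin r))))
    (hO : (0 : EuclideanSpace ℝ (Fin r)) ∈ interior P) :
    ∃ Λ : ℝ, 0 < Λ ∧ ∀ u : EuclideanSpace ℝ (Fin r) → ℝ,
      ConvexOn ℝ P u → (∀ y ∈ P, 0 ≤ u y) → u 0 = 0 → ContinuousOn u P →
      ∫ y in P, u y ≤ Λ * ∫ y in frontier P, u y ∂(μH[(r : ℝ) - 1]) := by
  rcases Nat.eq_zero_or_pos r with hr0 | hr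
  · -- dimension 0 : the space is a single point
    subst hr0
    have hsub : Subsingleton (EuclideanSpace ℝ (Fin 0)) :=
      ⟨fun a b => (WithLp.ext_iff 2).2 (funext fun i => Fin.elim0 i)⟩
    refine ⟨1, one_pos, fun u hconv hnn h0 hcont => ?_⟩
    have hPuniv : P = univ := by
      apply eq_univ_of_forall
      intro x
      have : x = 0 := Subsingleton.elim x 0
      rw [this]
      exact interior_subset hO
    have hfr : frontier P = ∅ := by rw [hPuniv, frontier_univ]
    have hu0 : ∀ y, u y = 0 := fun y => by
      have : y = (0 : EuclideanSpace ℝ (Fin 0)) := Subsingleton.elim _ _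
      rw [this, h0]
    have hL : ∫ y in P, u y = 0 := by
      have : u = fun _ => (0:ℝ) := funext hu0
      rw [this]
      simp
    rw [hL, hfr]
    simp
  -- main case r ≥ 1
  have hPcomp : IsCompact P := hP ▸ V.finite_toSet.isCompact_convexHull ℝ
  have hPconv : Convex ℝ P := hP ▸ convex_convexHull ℝ _
  have hPclosed : IsClosed P := hPcomp.isClosed
  have hPmeas : MeasurableSet P := hPclosed.measurableSet
  have hnhds : P ∈ nhds (0 : EuclideanSpace ℝ (Fin r)) := mem_interior_iff_mem_nhds.1 hO
  have h0P : (0 : EuclideanSpace ℝ (Fin r)) ∈ P := mem_of_mem_nhds hnhds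
  obtain ⟨R0, hR0⟩ := hPcomp.isBounded.subset_closedBall 0
  set R : ℝ := max R0 1 with hRdef
  have hR : 1 ≤ R := le_max_right _ _
  have hPR : P ⊆ closedBall 0 R := hR0.trans (closedBall_subset_closedBall (le_max_left _ _))
  have hfrP : frontier P ⊆ P := hPclosed.frontier_subset
  have hfrmeas : MeasurableSet (frontier P) := isClosed_frontier.measurableSet
  have hσfin : μH[(r:ℝ)-1] (frontier P) < ⊤ := frontier_finite hr hPconv hnhds hR hPR
  have habs : Absorbent ℝ P := absorbent_nhds_zero hnhds
  have hbdd : Bornology.IsVonNBounded ℝ P :=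
    (NormedSpace.isVonNBounded_iff ℝ).2 hPcomp.isBounded
  set Λ : ℝ := (C4 r R).toReal with hΛdef
  have hΛpos : 0 < Λ := ENNReal.toReal_pos (C4_pos hR).ne' C4_ne_top
  refine ⟨Λ, hΛpos, fun u hconv hnn h0 hcont => ?_⟩
  set σ : Measure (EuclideanSpace ℝ (Fin r)) := μH[(r:ℝ)-1] with hσdef
  have hmeasP : AEStronglyMeasurable u (volume.restrict P) :=
    hcont.aestronglyMeasurable hPmeas
  have hcontF : ContinuousOn u (frontier P) := hcont.mono hfrP
  have hmeasF : AEStronglyMeasurable u (σ.restrict (frontier P)) :=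
    hcontF.aestronglyMeasurable hfrmeas
  have hnnP : 0 ≤ᵐ[volume.restrict P] u := ae_restrict_of_forall_mem hPmeas hnn
  have hnnF : 0 ≤ᵐ[σ.restrict (frontier P)] u :=
    ae_restrict_of_forall_mem hfrmeas (fun x hx => hnn x (hfrP hx))
  have hLHS : ∫ y in P, u y = (∫⁻ y in P, ENNReal.ofReal (u y)).toReal :=
    integral_eq_lintegral_of_nonneg_ae hnnP hmeasP
  have hRHS : ∫ y in frontier P, u y ∂σ
      = (∫⁻ y in frontier P, ENNReal.ofReal (u y) ∂σ).toReal :=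
    integral_eq_lintegral_of_nonneg_ae hnnF hmeasF
  have hlc1 : ∫⁻ y in P, ENNReal.ofReal (u y)
      = ∫⁻ t in Set.Ioi (0:ℝ), volume.restrict P {a | t < u a} :=
    lintegral_eq_lintegral_meas_lt _ hnnP hmeasP.aemeasurable
  have hlc2 : ∫⁻ y in frontier P, ENNReal.ofReal (u y) ∂σ
      = ∫⁻ t in Set.Ioi (0:ℝ), σ.restrict (frontier P) {a | t < u a} :=
    lintegral_eq_lintegral_meas_lt _ hnnF hmeasF.aemeasurable
  have hkey : ∀ t ∈ Set.Ioi (0:ℝ),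
      volume.restrict P {a | t < u a} ≤ C4 r R * σ.restrict (frontier P) {a | t < u a} := by
    intro t ht
    rw [mem_Ioi] at ht
    rw [Measure.restrict_apply' hPmeas, Measure.restrict_apply' hfrmeas]
    set B := {a | t < u a} ∩ frontier P with hB
    have hsub : {a | t < u a} ∩ P ⊆ cone4 B := by
      rintro x ⟨hxu, hxP⟩
      rw [mem_setOf_eq] at hxu
      have hx0 : x ≠ 0 := by
        intro h
        rw [h, h0] at hxu
        linarith
      set a := gauge P x with ha
      have ha1 : a ≤ 1 := gauge_le_one_of_mem hxP
      have ha0 : 0 < a := (gauge_pos habs hbdd).2 hx0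
      set x' := a⁻¹ • x with hx'
      have hgx' : gauge P x' = 1 := by
        rw [hx', gauge_smul_of_nonneg (inv_nonneg.2 ha0.le), smul_eq_mul, ← ha]
        field_simp
      have hx'F : x' ∈ frontier P := (gauge_eq_one_iff_mem_frontier hPconv hnhds).1 hgx'
      have hx'P : x' ∈ P := hfrP hx'F
      have hxx' : x = a • x' := (smul_inv_smul₀ ha0.ne' x).symm
      have hu' : u x ≤ u x' := by
        have hc := hconv.2 h0P hx'P (by linarith : (0:ℝ) ≤ 1 - a) ha0.le (by ring)
        rw [smul_zero, zero_add] at hc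
        calc u x = u (a • x') := by rw [← hxx']
          _ ≤ (1-a) * u 0 + a * u x' := hc
          _ = a * u x' := by rw [h0]; ring
          _ ≤ u x' := by nlinarith [hnn x' hx'P]
      exact ⟨a, ⟨ha0, ha1⟩, x', ⟨lt_of_lt_of_le hxu hu', hx'F⟩, hxx'⟩
    calc volume ({a | t < u a} ∩ P) ≤ volume (cone4 B) := measure_mono hsub
      _ ≤ C4 r R * μH[(r:ℝ)-1] B :=
          cone4_le hr hR B (inter_subset_right.trans (hfrP.trans hPR))
  have hmain : ∫⁻ y in P, ENNReal.ofReal (u y)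
      ≤ C4 r R * ∫⁻ y in frontier P, ENNReal.ofReal (u y) ∂σ := by
    rw [hlc1, hlc2, ← lintegral_const_mul' _ _ C4_ne_top]
    apply lintegral_mono_ae
    exact (ae_restrict_iff' measurableSet_Ioi).2 (ae_of_all _ hkey)
  have hMfin : ∫⁻ y in frontier P, ENNReal.ofReal (u y) ∂σ ≠ ⊤ := by
    obtain ⟨M, hM⟩ := hPcomp.exists_bound_of_continuousOn hcont
    have hbound : ∫⁻ y in frontier P, ENNReal.ofReal (u y) ∂σ
        ≤ ∫⁻ _y in frontier P, ENNReal.ofReal M ∂σ := by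
      apply lintegral_mono_ae
      refine (ae_restrict_iff' hfrmeas).2 (ae_of_all _ fun y hy => ?_)
      apply ENNReal.ofReal_le_ofReal
      calc u y ≤ |u y| := le_abs_self _
        _ = ‖u y‖ := (Real.norm_eq_abs _).symm
        _ ≤ M := hM y (hfrP hy)
    refine (lt_of_le_of_lt hbound ?_).ne
    rw [setLIntegral_const]
    exact ENNReal.mul_lt_top ENNReal.ofReal_lt_top hσfin
  rw [hLHS, hRHS]
  calc (∫⁻ y in P, ENNReal.ofReal (u y)).toReal
      ≤ (C4 r R * ∫⁻ y in frontier P, ENNReal.ofReal (u y) ∂σ).toReal :=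
        ENNReal.toReal_mono (ENNReal.mul_ne_top C4_ne_top hMfin) hmain
    _ = Λ * (∫⁻ y in frontier P, ENNReal.ofReal (u y) ∂σ).toReal := ENNReal.toReal_mul
end
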